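/- Abstraction soundness for constrained reachability (until): let (S, P) be a finite DTMC, h : S → Ŝ a surjective abstraction function, and C, B ⊆ S h-saturated sets with Ĉ = h(C) and B̂ = h(B). Let minuntil and maxuntil be the until value-iteration sequences of the induced abstract MDP with avoid set Ĉ and target B̂. Then for every n ∈ ℕ and every s ∈ S, minuntil n (h s) ≤ until n s ≤ maxuntil n (h s); consequently, ⨆ₙ minuntil n (h s) ≤ PUntil s ≤ ⨆ₙ maxuntil n (h s). -/
import Mathlib


open scoped Classical

/-- Concretization of an abstract state: `γ(t) = h⁻¹({t})`, as a finset. -/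
noncomputable def gammaSet {S T : Type*} [Fintype S] (h : S → T) (t : T) : Finset S :=
  Finset.univ.filter fun s => h s = t

/-- The concretization of every abstract state is nonempty when `h` is surjective. -/
theorem gammaSet_nonempty {S T : Type*} [Fintype S] (h : S → T)
    (hsurj : Function.Surjective h) (t : T) : (gammaSet h t).Nonempty := by
  obtain ⟨s, hs⟩ := hsurj t
  exact ⟨s, by simp [gammaSet, hs]⟩

/-- Abstract transition function of the induced abstract MDP:
`P̂ ŝ α ŝ' = ∑_{s' ∈ γ(ŝ')} P α s'`. -/
noncomputable def absP {S T : Type*} [Fintype S] (P : S → S → ℝ) (h : S → T)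
    (α : S) (t' : T) : ℝ :=
  ∑ s' ∈ gammaSet h t', P α s'

/-- Minimum until value iteration of the induced abstract MDP with avoid set `Ch`
and target set `Bh`. -/
noncomputable def absMinUntil {S T : Type*} [Fintype S] [Fintype T]
    (P : S → S → ℝ) (h : S → T) (hsurj : Function.Surjective h) (Ch Bh : Set T) :
    ℕ → T → ℝ
  | 0, t => if t ∈ Bh then 1 else 0
  | n + 1, t =>
      if t ∈ Bh then 1
      else if t ∈ Ch then 0
      else (gammaSet h t).inf' (gammaSet_nonempty h hsurj t) fun α =>
        ∑ t' : T, absP P h α t' * absMinUntil P h hsurj Ch Bh n t'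

/-- Maximum until value iteration of the induced abstract MDP with avoid set `Ch`
and target set `Bh`. -/
noncomputable def absMaxUntil {S T : Type*} [Fintype S] [Fintype T]
    (P : S → S → ℝ) (h : S → T) (hsurj : Function.Surjective h) (Ch Bh : Set T) :
    ℕ → T → ℝ
  | 0, t => if t ∈ Bh then 1 else 0
  | n + 1, t =>
      if t ∈ Bh then 1
      else if t ∈ Ch then 0
      else (gammaSet h t).sup' (gammaSet_nonempty h hsurj t) fun α =>
        ∑ t' : T, absP P h α t' * absMaxUntil P h hsurj Ch Bh n t'

/-- n-step constrained reachability values for the until property ¬C U B in the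
concrete DTMC. -/
noncomputable def untilN {S : Type*} [Fintype S] (P : S → S → ℝ) (C B : Set S) :
    ℕ → S → ℝ
  | 0, s => if s ∈ B then 1 else 0
  | n + 1, s =>
      if s ∈ B then 1 else if s ∈ C then 0 else ∑ s' : S, P s s' * untilN P C B n s'

lemma sum_absP {S T : Type*} [Fintype S] [Fintype T] (P : S → S → ℝ) (h : S → T)
    (α : S) (g : T → ℝ) :
    ∑ t' : T, absP P h α t' * g t' = ∑ s' : S, P α s' * g (h s') := by
  rw [← Finset.sum_fiberwise Finset.univ h (fun s' => P α s' * g (h s'))]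
  refine Finset.sum_congr rfl fun t _ => ?_
  rw [absP, Finset.sum_mul, gammaSet]
  refine Finset.sum_congr rfl fun s hs => ?_
  simp only [Finset.mem_filter] at hs
  rw [hs.2]

lemma untilN_bounds {S : Type*} [Fintype S] (P : S → S → ℝ)
    (hP : ∀ s s' : S, 0 ≤ P s s') (hsum : ∀ s : S, ∑ s' : S, P s s' = 1)
    (C B : Set S) : ∀ (n : ℕ) (s : S), 0 ≤ untilN P C B n s ∧ untilN P C B n s ≤ 1 := by
  intro n
  induction n with
  | zero => intro s; by_cases hs : s ∈ B <;> simp [untilN, hs]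
  | succ n ih =>
    intro s
    by_cases hB : s ∈ B
    · simp [untilN, hB]
    by_cases hC : s ∈ C
    · simp [untilN, hB, hC]
    simp only [untilN, hB, hC, if_false]
    constructor
    · exact Finset.sum_nonneg fun s' _ => mul_nonneg (hP s s') (ih s').1
    · calc ∑ s' : S, P s s' * untilN P C B n s' ≤ ∑ s' : S, P s s' * 1 :=
            Finset.sum_le_sum fun s' _ => mul_le_mul_of_nonneg_left (ih s').2 (hP s s')
        _ = 1 := by simpa using hsum s

lemma absMinUntil_nonneg {S T : Type*} [Fintype S] [Fintype T]
    (P : S → S → ℝ) (hP : ∀ s s' : S, 0 ≤ P s s')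
    (h : S → T) (hsurj : Function.Surjective h) (Ch Bh : Set T) :
    ∀ (n : ℕ) (t : T), 0 ≤ absMinUntil P h hsurj Ch Bh n t := by
  intro n
  induction n with
  | zero => intro t; by_cases ht : t ∈ Bh <;> simp [absMinUntil, ht]
  | succ n ih =>
    intro t
    by_cases hB : t ∈ Bh
    · simp [absMinUntil, hB]
    by_cases hC : t ∈ Ch
    · simp [absMinUntil, hB, hC]
    simp only [absMinUntil, hB, hC, if_false]
    apply Finset.le_inf'
    intro α _
    exact Finset.sum_nonneg fun t' _ => mul_nonneg
      (Finset.sum_nonneg fun s' _ => hP α s') (ih t')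

lemma absMaxUntil_le_one {S T : Type*} [Fintype S] [Fintype T]
    (P : S → S → ℝ) (hP : ∀ s s' : S, 0 ≤ P s s')
    (hsum : ∀ s : S, ∑ s' : S, P s s' = 1)
    (h : S → T) (hsurj : Function.Surjective h) (Ch Bh : Set T) :
    ∀ (n : ℕ) (t : T), absMaxUntil P h hsurj Ch Bh n t ≤ 1 := by
  intro n
  induction n with
  | zero => intro t; by_cases ht : t ∈ Bh <;> simp [absMaxUntil, ht]
  | succ n ih =>
    intro t
    by_cases hB : t ∈ Bh
    · simp [absMaxUntil, hB]
    by_cases hC : t ∈ Ch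
    · simp [absMaxUntil, hB, hC]
    simp only [absMaxUntil, hB, hC, if_false]
    apply Finset.sup'_le
    intro α _
    calc ∑ t' : T, absP P h α t' * absMaxUntil P h hsurj Ch Bh n t'
        ≤ ∑ t' : T, absP P h α t' * 1 :=
          Finset.sum_le_sum fun t' _ => mul_le_mul_of_nonneg_left (ih t')
            (Finset.sum_nonneg fun s' _ => hP α s')
      _ = ∑ s' : S, P α s' * 1 := sum_absP P h α 1
      _ = 1 := by simpa using hsum α

/-- Abstraction soundness for constrained reachability (until): let
(S, P) be a finite DTMC, h : S → Ŝ a surjective abstraction function, and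
C, B ⊆ S h-saturated sets with Ĉ = h(C) and B̂ = h(B). Then for every n and every
concrete state s, `minuntil n (h s) ≤ until n s ≤ maxuntil n (h s)`; consequently
`⨆ₙ minuntil n (h s) ≤ PUntil s ≤ ⨆ₙ maxuntil n (h s)`. -/
theorem abstraction_sound_until {S T : Type*}
    [Fintype S] [Nonempty S] [Fintype T]
    (P : S → S → ℝ)
    (hP : ∀ s s' : S, 0 ≤ P s s')
    (hsum : ∀ s : S, ∑ s' : S, P s s' = 1)
    (h : S → T) (hsurj : Function.Surjective h)
    (C B : Set S) (hsatC : C = h ⁻¹' (h '' C)) (hsatB : B = h ⁻¹' (h '' B)) :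
    (∀ (n : ℕ) (s : S),
        absMinUntil P h hsurj (h '' C) (h '' B) n (h s) ≤ untilN P C B n s ∧
        untilN P C B n s ≤ absMaxUntil P h hsurj (h '' C) (h '' B) n (h s)) ∧
    (∀ s : S,
        (⨆ n : ℕ, absMinUntil P h hsurj (h '' C) (h '' B) n (h s)) ≤
            (⨆ n : ℕ, untilN P C B n s) ∧
        (⨆ n : ℕ, untilN P C B n s) ≤
            ⨆ n : ℕ, absMaxUntil P h hsurj (h '' C) (h '' B) n (h s)) := by
  have hmemB : ∀ s : S, h s ∈ h '' B ↔ s ∈ B := fun s =>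
    ⟨fun hx => by rw [hsatB]; exact hx, fun hx => ⟨s, hx, rfl⟩⟩
  have hmemC : ∀ s : S, h s ∈ h '' C ↔ s ∈ C := fun s =>
    ⟨fun hx => by rw [hsatC]; exact hx, fun hx => ⟨s, hx, rfl⟩⟩
  have hmem : ∀ s : S, s ∈ gammaSet h (h s) := fun s => by simp [gammaSet]
  have main : ∀ (n : ℕ) (s : S),
      absMinUntil P h hsurj (h '' C) (h '' B) n (h s) ≤ untilN P C B n s ∧
      untilN P C B n s ≤ absMaxUntil P h hsurj (h '' C) (h '' B) n (h s) := by
    intro n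
    induction n with
    | zero =>
      intro s
      by_cases hs : s ∈ B <;>
        simp [absMinUntil, absMaxUntil, untilN, hs, hmemB s]
    | succ n ih =>
      intro s
      by_cases hB : s ∈ B
      · simp [absMinUntil, absMaxUntil, untilN, hB, (hmemB s).2 hB]
      have hB' : h s ∉ h '' B := fun hx => hB ((hmemB s).1 hx)
      by_cases hC : s ∈ C
      · simp [absMinUntil, absMaxUntil, untilN, hB, hB', hC, (hmemC s).2 hC]
      have hC' : h s ∉ h '' C := fun hx => hC ((hmemC s).1 hx)
      simp only [absMinUntil, absMaxUntil, untilN, hB, hB', hC, hC', if_false]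
      constructor
      · calc (gammaSet h (h s)).inf' (gammaSet_nonempty h hsurj (h s)) (fun α =>
              ∑ t' : T, absP P h α t' * absMinUntil P h hsurj (h '' C) (h '' B) n t')
            ≤ ∑ t' : T, absP P h s t' * absMinUntil P h hsurj (h '' C) (h '' B) n t' :=
              Finset.inf'_le _ (hmem s)
          _ = ∑ s' : S, P s s' * absMinUntil P h hsurj (h '' C) (h '' B) n (h s') :=
              sum_absP P h s _
          _ ≤ ∑ s' : S, P s s' * untilN P C B n s' :=
              Finset.sum_le_sum fun s' _ =>
                mul_le_mul_of_nonneg_left (ih s').1 (hP s s')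
      · calc ∑ s' : S, P s s' * untilN P C B n s'
            ≤ ∑ s' : S, P s s' * absMaxUntil P h hsurj (h '' C) (h '' B) n (h s') :=
              Finset.sum_le_sum fun s' _ =>
                mul_le_mul_of_nonneg_left (ih s').2 (hP s s')
          _ = ∑ t' : T, absP P h s t' * absMaxUntil P h hsurj (h '' C) (h '' B) n t' :=
              (sum_absP P h s _).symm
          _ ≤ _ := Finset.le_sup' (fun α => ∑ t' : T, absP P h α t' * absMaxUntil P h hsurj (h '' C) (h '' B) n t') (hmem s)
  refine ⟨main, fun s => ?_⟩
  constructor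
  · refine ciSup_mono ⟨1, fun x ⟨n, hn⟩ => hn ▸ (untilN_bounds P hP hsum C B n s).2⟩
      fun n => (main n s).1
  · refine ciSup_mono ⟨1, fun x ⟨n, hn⟩ => hn ▸
      absMaxUntil_le_one P hP hsum h hsurj _ _ n (h s)⟩ fun n => (main n s).2
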